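/- On a group of Heisenberg type (i.e., -J_μ² = |μ|²I for all μ), the Hamiltonian flow starting at the origin with covector (ξ,μ), ξ≠0, μ≠0, satisfies, with θ = t|μ|/(2|ξ|), μ̄ = μ/|μ|, ξ̄ = ξ/|ξ|: xᵗ = t (sin θ/θ)(cos θ · I + sin θ · J_{μ̄}) ξ̄, ξᵗ = cos θ (cos θ · I + sin θ · J_{μ̄}) ξ, and uᵗ = (t²/(4θ))(1 - (sin θ/θ) cos θ) μ̄. -/

import Mathlib

open Matrix Function

/-- The (1-homogeneous) Hamiltonian `ℋ(x, u, ξ, μ) = |ξ + J_μ x / 2|`; it is independent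
of `u`, but `u` is kept as a formal argument. -/
noncomputable def sqrtHam {d₁ d₂ : ℕ} (J : (Fin d₂ → ℝ) →ₗ[ℝ] Matrix (Fin d₁) (Fin d₁) ℝ)
    (x : Fin d₁ → ℝ) (_u : Fin d₂ → ℝ) (ξ : Fin d₁ → ℝ) (μ : Fin d₂ → ℝ) : ℝ :=
  Real.sqrt ((ξ + (1 / 2 : ℝ) • (J μ).mulVec x) ⬝ᵥ (ξ + (1 / 2 : ℝ) • (J μ).mulVec x))

lemma constOf {f : ℝ → ℝ} (h : ∀ t, HasDerivAt f 0 t) (t : ℝ) : f t = f 0 :=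
  is_const_of_deriv_eq_zero (fun s => (h s).differentiableAt) (fun s => (h s).deriv) t 0

lemma dotSelfNonneg {d : ℕ} (v : Fin d → ℝ) : 0 ≤ v ⬝ᵥ v :=
  Finset.sum_nonneg fun _ _ => mul_self_nonneg _

lemma dotSelfPos {d : ℕ} {v : Fin d → ℝ} (hv : v ≠ 0) : 0 < v ⬝ᵥ v :=
  lt_of_le_of_ne (dotSelfNonneg v) (fun h => hv (dotProduct_self_eq_zero.mp h.symm))

lemma updEq {d : ℕ} (v : Fin d → ℝ) (i : Fin d) (a : ℝ) :
    update v i a = v + (a - v i) • (Pi.single i 1 : Fin d → ℝ) := by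
  funext k
  by_cases h : k = i
  · subst h; simp
  · simp [h, Pi.single_eq_of_ne h]

lemma keyDeriv {d : ℕ} (w z : Fin d → ℝ) (hw : w ⬝ᵥ w ≠ 0) (a₀ : ℝ) :
    HasDerivAt (fun a => Real.sqrt ((w + (a - a₀) • z) ⬝ᵥ (w + (a - a₀) • z)))
      ((w ⬝ᵥ z) / Real.sqrt (w ⬝ᵥ w)) a₀ := by
  have hq : ∀ a : ℝ, (w + (a - a₀) • z) ⬝ᵥ (w + (a - a₀) • z)
      = w ⬝ᵥ w + (a - a₀) * (2 * (w ⬝ᵥ z)) + (a - a₀)^2 * (z ⬝ᵥ z) := by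
    intro a
    simp only [dotProduct_add, add_dotProduct, smul_dotProduct, dotProduct_smul,
      dotProduct_comm z w, smul_eq_mul]
    ring
  have hb : HasDerivAt (fun a : ℝ => a - a₀) 1 a₀ := (hasDerivAt_id a₀).sub_const a₀
  have h1 : HasDerivAt (fun a : ℝ => w ⬝ᵥ w + (a - a₀) * (2 * (w ⬝ᵥ z)) + (a - a₀)^2 * (z ⬝ᵥ z))
      (2 * (w ⬝ᵥ z)) a₀ := by
    have := ((hb.mul_const (2 * (w ⬝ᵥ z))).const_add (w ⬝ᵥ w)).add
      ((hb.pow 2).mul_const (z ⬝ᵥ z))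
    exact this.congr_deriv (by simp)
  have h2 := h1.sqrt (by simpa using hw)
  have heq : (fun a => Real.sqrt ((w + (a - a₀) • z) ⬝ᵥ (w + (a - a₀) • z)))
      = fun a => Real.sqrt (w ⬝ᵥ w + (a - a₀) * (2 * (w ⬝ᵥ z)) + (a - a₀)^2 * (z ⬝ᵥ z)) := by
    funext a; rw [hq a]
  rw [heq]
  convert h2 using 1
  simp
  ring

lemma derivOfAffine {d : ℕ} (f : ℝ → Fin d → ℝ) (w z : Fin d → ℝ) (a₀ : ℝ)
    (hf : ∀ a, f a = w + (a - a₀) • z) (hw : w ⬝ᵥ w ≠ 0) :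
    deriv (fun a => Real.sqrt (f a ⬝ᵥ f a)) a₀ = (w ⬝ᵥ z) / Real.sqrt (w ⬝ᵥ w) := by
  have heq : (fun a => Real.sqrt (f a ⬝ᵥ f a))
      = fun a => Real.sqrt ((w + (a - a₀) • z) ⬝ᵥ (w + (a - a₀) • z)) := by
    funext a; rw [hf a]
  rw [heq]
  exact (keyDeriv w z hw a₀).deriv

lemma skewDot {d : ℕ} {M : Matrix (Fin d) (Fin d) ℝ} (hM : Mᵀ = -M) (w : Fin d → ℝ) :
    w ⬝ᵥ (M *ᵥ w) = 0 := by
  have h1 : w ⬝ᵥ (M *ᵥ w) = (Mᵀ *ᵥ w) ⬝ᵥ w := by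
    rw [Matrix.dotProduct_mulVec, Matrix.mulVec_transpose]
  rw [hM, Matrix.neg_mulVec] at h1
  have h2 : (-(M *ᵥ w)) ⬝ᵥ w = -(w ⬝ᵥ (M *ᵥ w)) := by
    rw [neg_dotProduct, dotProduct_comm]
  rw [h2] at h1
  linarith

lemma dotMM {d : ℕ} (M N : Matrix (Fin d) (Fin d) ℝ) (a : Fin d → ℝ) :
    (M *ᵥ a) ⬝ᵥ (N *ᵥ a) = a ⬝ᵥ ((Nᵀ * M) *ᵥ a) := by
  rw [Matrix.dotProduct_mulVec, ← Matrix.mulVec_transpose, Matrix.mulVec_mulVec,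
    dotProduct_comm]

lemma cosTwoMulSin (x : ℝ) : Real.cos (2*x) = 1 - 2*Real.sin x^2 := by
  rw [Real.cos_two_mul']
  have := Real.sin_sq_add_cos_sq x
  linarith


set_option maxHeartbeats 4000000 in
/-- On a group of Heisenberg type (i.e. `-J_μ² = |μ|² I` for all `μ`),
any solution of Hamilton's equations for `ℋ = |ξ + J_μ x/2|` starting at the origin with
covector `(ξ₀, μ₀)`, `ξ₀ ≠ 0`, `μ₀ ≠ 0`, satisfies, with `θ = t|μ₀|/(2|ξ₀|)`,
`μ̄ = μ₀/|μ₀|`, `ξ̄ = ξ₀/|ξ₀|`: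
`xᵗ = t (sin θ/θ)(cos θ · I + sin θ · J_μ̄) ξ̄`,
`ξᵗ = cos θ (cos θ · I + sin θ · J_μ̄) ξ₀`, and
`uᵗ = (t²/(4θ))(1 - (sin θ/θ) cos θ) μ̄`. -/
theorem statement14 {d₁ d₂ : ℕ}
    (J : (Fin d₂ → ℝ) →ₗ[ℝ] Matrix (Fin d₁) (Fin d₁) ℝ)
    (hskew : ∀ μ, (J μ)ᵀ = -(J μ))
    (hHtype : ∀ μ : Fin d₂ → ℝ,
      J μ * J μ = -((μ ⬝ᵥ μ) • (1 : Matrix (Fin d₁) (Fin d₁) ℝ)))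
    (x : ℝ → Fin d₁ → ℝ) (u : ℝ → Fin d₂ → ℝ)
    (ξ : ℝ → Fin d₁ → ℝ) (μ : ℝ → Fin d₂ → ℝ)
    (ξ₀ : Fin d₁ → ℝ) (μ₀ : Fin d₂ → ℝ) (hξ₀ : ξ₀ ≠ 0) (hμ₀ : μ₀ ≠ 0)
    (hx0 : x 0 = 0) (hu0 : u 0 = 0) (hξ0 : ξ 0 = ξ₀) (hμ0 : μ 0 = μ₀)
    (hHamx : ∀ (t : ℝ) (i : Fin d₁), HasDerivAt (fun s => x s i)
      (deriv (fun a => sqrtHam J (x t) (u t) (update (ξ t) i a) (μ t)) (ξ t i)) t)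
    (hHamu : ∀ (t : ℝ) (j : Fin d₂), HasDerivAt (fun s => u s j)
      (deriv (fun a => sqrtHam J (x t) (u t) (ξ t) (update (μ t) j a)) (μ t j)) t)
    (hHamξ : ∀ (t : ℝ) (i : Fin d₁), HasDerivAt (fun s => ξ s i)
      (-(deriv (fun a => sqrtHam J (update (x t) i a) (u t) (ξ t) (μ t)) (x t i))) t)
    (hHamμ : ∀ (t : ℝ) (j : Fin d₂), HasDerivAt (fun s => μ s j)
      (-(deriv (fun a => sqrtHam J (x t) (update (u t) j a) (ξ t) (μ t)) (u t j))) t) :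
    ∀ t : ℝ,
      let nξ := Real.sqrt (ξ₀ ⬝ᵥ ξ₀)
      let nμ := Real.sqrt (μ₀ ⬝ᵥ μ₀)
      let θ := t * nμ / (2 * nξ)
      let ξb := nξ⁻¹ • ξ₀
      let μb := nμ⁻¹ • μ₀
      x t = (t * (Real.sin θ / θ)) •
          (Real.cos θ • ξb + Real.sin θ • (J μb).mulVec ξb) ∧
      ξ t = Real.cos θ • (Real.cos θ • ξ₀ + Real.sin θ • (J μb).mulVec ξ₀) ∧
      u t = (t ^ 2 / (4 * θ) * (1 - Real.sin θ / θ * Real.cos θ)) • μb := by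
  classical
  have hc2 : (0:ℝ) < ξ₀ ⬝ᵥ ξ₀ := dotSelfPos hξ₀
  have hm2 : (0:ℝ) < μ₀ ⬝ᵥ μ₀ := dotSelfPos hμ₀
  set c := Real.sqrt (ξ₀ ⬝ᵥ ξ₀) with hcdef
  set nm := Real.sqrt (μ₀ ⬝ᵥ μ₀) with hnmdef
  have hcpos : 0 < c := Real.sqrt_pos.2 hc2
  have hnmpos : 0 < nm := Real.sqrt_pos.2 hm2
  have hcsq : c^2 = ξ₀ ⬝ᵥ ξ₀ := Real.sq_sqrt hc2.le
  have hnmsq : nm^2 = μ₀ ⬝ᵥ μ₀ := Real.sq_sqrt hm2.le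
  set μb : Fin d₂ → ℝ := nm⁻¹ • μ₀ with hμbdef
  set A := J μb with hAdef
  have hμbdot : μb ⬝ᵥ μb = 1 := by
    rw [hμbdef, smul_dotProduct, dotProduct_smul, ← hnmsq]
    field_simp
    ring
    rw [← mul_pow, mul_inv_cancel₀ hnmpos.ne', one_pow]
  have hA2 : A * A = -1 := by
    rw [hAdef, hHtype μb, hμbdot]; simp
  have hJA : J μ₀ = nm • A := by
    rw [hAdef, hμbdef, LinearMap.map_smul, smul_smul]
    field_simp
    rw [one_smul]
  have hAskew : Aᵀ = -A := by rw [hAdef]; exact hskew μb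
  clear_value A μb nm c
  -- Step A : μ is constant
  have hμc : ∀ t, μ t = μ₀ := by
    have h : ∀ j t, HasDerivAt (fun s => μ s j) 0 t := by
      intro j t
      have h0 : (fun a => sqrtHam J (x t) (update (u t) j a) (ξ t) (μ t))
          = fun _ => sqrtHam J (x t) (u t) (ξ t) (μ t) := rfl
      have h1 := hHamμ t j
      rw [h0, deriv_const] at h1
      simpa using h1
    intro t; funext j
    have h2 := constOf (h j) t
    rw [h2, hμ0]
  -- the momentum vector V
  set V : ℝ → Fin d₁ → ℝ := fun s => ξ s + (1/2:ℝ) • ((J μ₀) *ᵥ x s) with hVdef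
  have hV0 : V 0 = ξ₀ := by simp [hVdef, hx0, hξ0]
  clear_value V
  -- partial derivative computations (when V t ≠ 0)
  have hDx : ∀ t, V t ⬝ᵥ V t ≠ 0 → ∀ i,
      deriv (fun a => sqrtHam J (x t) (u t) (update (ξ t) i a) (μ t)) (ξ t i)
        = V t i / Real.sqrt (V t ⬝ᵥ V t) := by
    intro t hv i
    have h := derivOfAffine
      (fun a => update (ξ t) i a + (1/2:ℝ) • ((J (μ t)) *ᵥ x t))
      (V t) (Pi.single i 1) (ξ t i)
      (fun a => by simp only [hVdef]; rw [hμc t, updEq]; module) hv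
    rw [dotProduct_single, mul_one] at h
    exact h
  have hDξ : ∀ t, V t ⬝ᵥ V t ≠ 0 → ∀ i,
      deriv (fun a => sqrtHam J (update (x t) i a) (u t) (ξ t) (μ t)) (x t i)
        = -((J μ₀ *ᵥ V t) i) / (2 * Real.sqrt (V t ⬝ᵥ V t)) := by
    intro t hv i
    have h := derivOfAffine
      (fun a => ξ t + (1/2:ℝ) • ((J (μ t)) *ᵥ update (x t) i a))
      (V t) ((1/2:ℝ) • ((J μ₀) *ᵥ (Pi.single i 1 : Fin d₁ → ℝ))) (x t i)
      (fun a => by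
        simp only [hVdef]
        rw [hμc t, updEq, Matrix.mulVec_add, Matrix.mulVec_smul, smul_add]
        module) hv
    have hval : V t ⬝ᵥ ((1/2:ℝ) • ((J μ₀) *ᵥ (Pi.single i 1 : Fin d₁ → ℝ)))
        = -((J μ₀ *ᵥ V t) i) / 2 := by
      rw [dotProduct_smul, Matrix.dotProduct_mulVec, ← Matrix.mulVec_transpose, hskew,
        Matrix.neg_mulVec, neg_dotProduct, dotProduct_single, mul_one, smul_eq_mul]
      ring
    rw [hval] at h
    have h2 : deriv (fun a => sqrtHam J (update (x t) i a) (u t) (ξ t) (μ t)) (x t i)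
        = (-((J μ₀ *ᵥ V t) i) / 2) / Real.sqrt (V t ⬝ᵥ V t) := h
    rw [h2]
    ring
  have hDu : ∀ t, V t ⬝ᵥ V t ≠ 0 → ∀ j,
      deriv (fun a => sqrtHam J (x t) (u t) (ξ t) (update (μ t) j a)) (μ t j)
        = (V t ⬝ᵥ ((J (Pi.single j 1)) *ᵥ x t)) / (2 * Real.sqrt (V t ⬝ᵥ V t)) := by
    intro t hv j
    have h := derivOfAffine
      (fun a => ξ t + (1/2:ℝ) • ((J (update (μ t) j a)) *ᵥ x t))
      (V t) ((1/2:ℝ) • ((J (Pi.single j 1 : Fin d₂ → ℝ)) *ᵥ x t)) (μ t j)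
      (fun a => by
        simp only [hVdef]
        rw [hμc t, updEq, LinearMap.map_add, LinearMap.map_smul, Matrix.add_mulVec, Matrix.smul_mulVec,
          smul_add]
        module) hv
    rw [dotProduct_smul, smul_eq_mul] at h
    have h2 : deriv (fun a => sqrtHam J (x t) (u t) (ξ t) (update (μ t) j a)) (μ t j)
        = ((1/2:ℝ) * (V t ⬝ᵥ ((J (Pi.single j 1)) *ᵥ x t))) / Real.sqrt (V t ⬝ᵥ V t) := h
    rw [h2]
    ring
  -- derivatives of x, ξ, V when V t ≠ 0
  have hx' : ∀ t, V t ≠ 0 → ∀ i,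
      HasDerivAt (fun s => x s i) (V t i / Real.sqrt (V t ⬝ᵥ V t)) t := by
    intro t hv i
    have := hHamx t i
    rwa [hDx t (dotSelfPos hv).ne' i] at this
  have hξ' : ∀ t, V t ≠ 0 → ∀ i,
      HasDerivAt (fun s => ξ s i) ((J μ₀ *ᵥ V t) i / (2 * Real.sqrt (V t ⬝ᵥ V t))) t := by
    intro t hv i
    have := hHamξ t i
    rwa [hDξ t (dotSelfPos hv).ne' i, neg_div, neg_neg] at this
  have hVfun : ∀ i, (fun s => V s i)
      = fun s => ξ s i + (1/2:ℝ) * ((J μ₀ *ᵥ x s) i) := by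
    intro i; funext s; simp [hVdef]
  have hmulfun : ∀ i, (fun s => ((J μ₀) *ᵥ x s) i) = fun s => ∑ k, J μ₀ i k * x s k := by
    intro i; rfl
  have hV' : ∀ t, V t ≠ 0 → ∀ i,
      HasDerivAt (fun s => V s i) ((J μ₀ *ᵥ V t) i / Real.sqrt (V t ⬝ᵥ V t)) t := by
    intro t hv i
    have hrpos : 0 < Real.sqrt (V t ⬝ᵥ V t) := Real.sqrt_pos.2 (dotSelfPos hv)
    have h2 : HasDerivAt (fun s => ((J μ₀) *ᵥ x s) i)
        (∑ k, J μ₀ i k * (V t k / Real.sqrt (V t ⬝ᵥ V t))) t := by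
      rw [hmulfun i]
      exact HasDerivAt.fun_sum (fun k _ => (hx' t hv k).const_mul _)
    rw [hVfun i]
    have h3 := (hξ' t hv i).add (h2.const_mul (1/2:ℝ))
    refine HasDerivAt.congr_deriv h3 ?_
    have hsum : ∑ k, J μ₀ i k * (V t k / Real.sqrt (V t ⬝ᵥ V t))
        = ((J μ₀ *ᵥ V t) i) / Real.sqrt (V t ⬝ᵥ V t) := by
      rw [show (J μ₀ *ᵥ V t) i = ∑ k, J μ₀ i k * V t k from rfl, Finset.sum_div]
      exact Finset.sum_congr rfl fun k _ => by ring
    rw [hsum]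
    field_simp
    ring
  -- conservation of |V|²
  have hVV : ∀ t, V t ⬝ᵥ V t = ξ₀ ⬝ᵥ ξ₀ := by
    have hVd : ∀ t i, HasDerivAt (fun s => V s i)
        ((-(deriv (fun a => sqrtHam J (update (x t) i a) (u t) (ξ t) (μ t)) (x t i))) +
          (1/2) * ∑ k, J μ₀ i k *
            (deriv (fun a => sqrtHam J (x t) (u t) (update (ξ t) k a) (μ t)) (ξ t k))) t := by
      intro t i
      have h2 : HasDerivAt (fun s => ((J μ₀) *ᵥ x s) i)
          (∑ k, J μ₀ i k *
            (deriv (fun a => sqrtHam J (x t) (u t) (update (ξ t) k a) (μ t)) (ξ t k))) t := by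
        rw [hmulfun i]
        exact HasDerivAt.fun_sum (fun k _ => (hHamx t k).const_mul _)
      rw [hVfun i]
      exact (hHamξ t i).add (h2.const_mul (1/2:ℝ))
    have hdot : (fun s => V s ⬝ᵥ V s) = fun s => ∑ i, V s i * V s i := rfl
    have hgod : ∀ t, HasDerivAt (fun s => V s ⬝ᵥ V s) 0 t := by
      intro t
      by_cases hv : V t = 0
      · have h := HasDerivAt.fun_sum (fun i (_ : i ∈ Finset.univ) => (hVd t i).mul (hVd t i))
        rw [hdot]
        refine HasDerivAt.congr_deriv h ?_
        have hzero : ∀ i, V t i = 0 := fun i => by rw [hv]; rfl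
        simp [hzero]
      · have h := HasDerivAt.fun_sum (fun i (_ : i ∈ Finset.univ) => (hV' t hv i).mul (hV' t hv i))
        rw [hdot]
        refine HasDerivAt.congr_deriv h ?_
        have hskew0 : V t ⬝ᵥ (J μ₀ *ᵥ V t) = 0 := skewDot (hskew μ₀) (V t)
        have hsum : ∑ i, ((J μ₀ *ᵥ V t) i / Real.sqrt (V t ⬝ᵥ V t) * V t i
              + V t i * ((J μ₀ *ᵥ V t) i / Real.sqrt (V t ⬝ᵥ V t)))
            = (2 / Real.sqrt (V t ⬝ᵥ V t)) * (V t ⬝ᵥ (J μ₀ *ᵥ V t)) := by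
          rw [show V t ⬝ᵥ (J μ₀ *ᵥ V t) = ∑ i, V t i * (J μ₀ *ᵥ V t) i from rfl,
            Finset.mul_sum]
          exact Finset.sum_congr rfl fun i _ => by ring
        rw [hsum, hskew0, mul_zero]
    intro t
    have h := constOf hgod t
    rw [h, hV0]
  have hVne : ∀ t, V t ≠ 0 := by
    intro t h
    exact hc2.ne' (by rw [← hVV t, h]; simp)
  have hrc : ∀ t, Real.sqrt (V t ⬝ᵥ V t) = c := fun t => by rw [hVV t, hcdef]
  -- clean global derivatives
  have hx'' : ∀ t i, HasDerivAt (fun s => x s i) (V t i / c) t := by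
    intro t i; have := hx' t (hVne t) i; rwa [hrc t] at this
  have hV'' : ∀ t i, HasDerivAt (fun s => V s i) ((nm/c) * ((A *ᵥ V t) i)) t := by
    intro t i
    have h := hV' t (hVne t) i
    rw [hrc t] at h
    refine HasDerivAt.congr_deriv h ?_
    rw [hJA, Matrix.smul_mulVec, Pi.smul_apply, smul_eq_mul]
    ring
  have hu'' : ∀ t j, HasDerivAt (fun s => u s j)
      ((V t ⬝ᵥ ((J (Pi.single j 1)) *ᵥ x t)) / (2*c)) t := by
    intro t j
    have := hHamu t j
    rwa [hDu t (dotSelfPos (hVne t)).ne' j, hrc t] at this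
  have hAV' : ∀ t i, HasDerivAt (fun s => (A *ᵥ V s) i) ((nm/c) * (-(V t i))) t := by
    intro t i
    have e : (fun s => (A *ᵥ V s) i) = fun s => ∑ k, A i k * V s k := rfl
    rw [e]
    have h := HasDerivAt.fun_sum (fun k (_ : k ∈ Finset.univ) => (hV'' t k).const_mul (A i k))
    refine HasDerivAt.congr_deriv h ?_
    have hsum : ∑ k, A i k * ((nm/c) * ((A *ᵥ V t) k)) = (nm/c) * (((A*A) *ᵥ V t) i) := by
      rw [← Matrix.mulVec_mulVec,
        show (A *ᵥ (A *ᵥ V t)) i = ∑ k, A i k * (A *ᵥ V t) k from rfl, Finset.mul_sum]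
      exact Finset.sum_congr rfl fun k _ => by ring
    rw [hsum, hA2, show ((-1 : Matrix (Fin d₁) (Fin d₁) ℝ) *ᵥ V t) = -(V t) by
      rw [Matrix.neg_mulVec, Matrix.one_mulVec]]
    simp
  -- rotation: cos(αs) V - sin(αs) A V is constant
  have hlin : ∀ t : ℝ, HasDerivAt (fun s : ℝ => (nm/c)*s) (nm/c) t := by
    intro t
    simpa using (hasDerivAt_id t).const_mul (nm/c)
  have hcosd : ∀ t : ℝ, HasDerivAt (fun s : ℝ => Real.cos ((nm/c)*s))
      (-Real.sin ((nm/c)*t) * (nm/c)) t := by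
    intro t
    have h2 := (Real.hasDerivAt_cos ((nm/c)*t)).comp t (hlin t)
    exact h2
  have hsind : ∀ t : ℝ, HasDerivAt (fun s : ℝ => Real.sin ((nm/c)*s))
      (Real.cos ((nm/c)*t) * (nm/c)) t := by
    intro t
    have h2 := (Real.hasDerivAt_sin ((nm/c)*t)).comp t (hlin t)
    exact h2
  have hrel : ∀ t, Real.cos ((nm/c)*t) • V t - Real.sin ((nm/c)*t) • (A *ᵥ V t) = ξ₀ := by
    have hy : ∀ i t, HasDerivAt
        (fun s => Real.cos ((nm/c)*s) * V s i - Real.sin ((nm/c)*s) * (A *ᵥ V s) i) 0 t := by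
      intro i t
      have h := ((hcosd t).mul (hV'' t i)).sub ((hsind t).mul (hAV' t i))
      refine HasDerivAt.congr_deriv h ?_
      ring
    intro t
    funext i
    have h := constOf (hy i) t
    simp only [Real.cos_zero, Real.sin_zero, mul_zero, zero_mul, one_mul, sub_zero] at h
    rw [hV0] at h
    simpa [Pi.sub_apply, smul_eq_mul] using h
  have hVform : ∀ t, V t = Real.cos ((nm/c)*t) • ξ₀ + Real.sin ((nm/c)*t) • (A *ᵥ ξ₀) := by
    intro t
    conv_lhs => rw [← one_smul ℝ (V t), ← Real.sin_sq_add_cos_sq ((nm/c)*t)]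
    rw [← hrel t, Matrix.mulVec_sub, Matrix.mulVec_smul, Matrix.mulVec_smul,
      Matrix.mulVec_mulVec, hA2,
      show ((-1 : Matrix (Fin d₁) (Fin d₁) ℝ) *ᵥ V t) = -(V t) by
        rw [Matrix.neg_mulVec, Matrix.one_mulVec]]
    module
  -- explicit formula for x
  have hxform : ∀ t, x t = (nm⁻¹ * Real.sin ((nm/c)*t)) • ξ₀
      + (nm⁻¹ * (1 - Real.cos ((nm/c)*t))) • (A *ᵥ ξ₀) := by
    have hder : ∀ i t, HasDerivAt (fun s => x s i
        - ((nm⁻¹ * Real.sin ((nm/c)*s)) * ξ₀ i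
          + (nm⁻¹ * (1 - Real.cos ((nm/c)*s))) * (A *ᵥ ξ₀) i)) 0 t := by
      intro i t
      have hc1 : HasDerivAt (fun s : ℝ => (nm⁻¹ * Real.sin ((nm/c)*s)) * ξ₀ i
          + (nm⁻¹ * (1 - Real.cos ((nm/c)*s))) * (A *ᵥ ξ₀) i)
          ((nm⁻¹ * (Real.cos ((nm/c)*t) * (nm/c))) * ξ₀ i
            + (nm⁻¹ * (Real.sin ((nm/c)*t) * (nm/c))) * (A *ᵥ ξ₀) i) t := by
        have h1 := (((hsind t).const_mul nm⁻¹).mul_const (ξ₀ i))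
        have h2' : HasDerivAt (fun s : ℝ => nm⁻¹ * (1 - Real.cos ((nm/c)*s)))
            (nm⁻¹ * (Real.sin ((nm/c)*t) * (nm/c))) t := by
          have := ((hcosd t).const_sub 1).const_mul nm⁻¹
          refine HasDerivAt.congr_deriv this ?_
          ring
        exact h1.add (h2'.mul_const _)
      have h := (hx'' t i).sub hc1
      refine HasDerivAt.congr_deriv h ?_
      rw [hVform t]
      simp only [Pi.add_apply, Pi.smul_apply, smul_eq_mul]
      all_goals field_simp
      all_goals ring
    intro t
    funext i
    have h' : x t i - ((nm⁻¹ * Real.sin ((nm/c)*t)) * ξ₀ i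
          + (nm⁻¹ * (1 - Real.cos ((nm/c)*t))) * (A *ᵥ ξ₀) i)
        = x 0 i - ((nm⁻¹ * Real.sin ((nm/c)*0)) * ξ₀ i
          + (nm⁻¹ * (1 - Real.cos ((nm/c)*0))) * (A *ᵥ ξ₀) i) := constOf (hder i) t
    rw [hx0] at h'
    simp only [Pi.zero_apply, mul_zero, Real.sin_zero, Real.cos_zero, zero_mul,
      sub_self, mul_one, add_zero, zero_sub, neg_zero, sub_zero, mul_zero] at h'
    simp only [Pi.add_apply, Pi.smul_apply, smul_eq_mul]
    linarith [h']
  -- explicit formula for ξ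
  have hξform : ∀ t, ξ t = V t - (1/2:ℝ) • ((J μ₀) *ᵥ x t) := by
    intro t; simp [hVdef]
  -- H-type polarization identities
  have hABBA : ∀ j : Fin d₂, A * (J (Pi.single j 1)) + (J (Pi.single j 1)) * A
      = (-(2 * (nm⁻¹ * μ₀ j))) • 1 := by
    intro j
    have h1 := hHtype (μb + Pi.single j 1)
    rw [LinearMap.map_add, ← hAdef] at h1
    have h2 : (A + J (Pi.single j 1)) * (A + J (Pi.single j 1))
        = A*A + (A*(J (Pi.single j 1)) + (J (Pi.single j 1))*A)
          + (J (Pi.single j 1))*(J (Pi.single j 1)) := by noncomm_ring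
    rw [h2, hA2, hHtype (Pi.single j 1)] at h1
    have h3 : ((μb + Pi.single j 1) ⬝ᵥ (μb + Pi.single j 1))
        = 1 + 2*(nm⁻¹ * μ₀ j)
          + ((Pi.single j 1 : Fin d₂ → ℝ) ⬝ᵥ (Pi.single j 1 : Fin d₂ → ℝ)) := by
      rw [dotProduct_add, add_dotProduct, add_dotProduct, hμbdot,
        dotProduct_comm (Pi.single j 1) μb]
      have hm : μb ⬝ᵥ (Pi.single j 1 : Fin d₂ → ℝ) = nm⁻¹ * μ₀ j := by
        rw [hμbdef, smul_dotProduct, dotProduct_single, mul_one, smul_eq_mul]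
      rw [hm]; ring
    rw [h3] at h1
    have h4 : A*(J (Pi.single j 1)) + (J (Pi.single j 1))*A
        = (-1 + (A*(J (Pi.single j 1)) + (J (Pi.single j 1))*A)
            + -((((Pi.single j 1 : Fin d₂ → ℝ) ⬝ᵥ (Pi.single j 1 : Fin d₂ → ℝ))) • 1))
          - (-1) + ((((Pi.single j 1 : Fin d₂ → ℝ) ⬝ᵥ (Pi.single j 1 : Fin d₂ → ℝ))) • 1) := by
      abel
    rw [h4, h1, add_smul, add_smul, one_smul, neg_smul]
    abel
  -- dot product identities
  have hStr : ∀ M : Matrix (Fin d₁) (Fin d₁) ℝ,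
      ξ₀ ⬝ᵥ (M *ᵥ ξ₀) = ξ₀ ⬝ᵥ (Mᵀ *ᵥ ξ₀) := by
    intro M
    rw [Matrix.dotProduct_mulVec, ← Matrix.mulVec_transpose, dotProduct_comm]
  have hSBA : ∀ j : Fin d₂, ξ₀ ⬝ᵥ (((J (Pi.single j 1)) * A) *ᵥ ξ₀)
      = -((nm⁻¹ * μ₀ j) * (ξ₀ ⬝ᵥ ξ₀)) := by
    intro j
    have h1 : ξ₀ ⬝ᵥ ((A * (J (Pi.single j 1))) *ᵥ ξ₀)
        = ξ₀ ⬝ᵥ (((J (Pi.single j 1)) * A) *ᵥ ξ₀) := by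
      rw [hStr (A * (J (Pi.single j 1))), Matrix.transpose_mul, hskew, hAskew,
        Matrix.neg_mul, Matrix.mul_neg, neg_neg]
    have h2 : ξ₀ ⬝ᵥ (((A * (J (Pi.single j 1))) + ((J (Pi.single j 1)) * A)) *ᵥ ξ₀)
        = (-(2 * (nm⁻¹ * μ₀ j))) * (ξ₀ ⬝ᵥ ξ₀) := by
      rw [hABBA j, Matrix.smul_mulVec, Matrix.one_mulVec, dotProduct_smul, smul_eq_mul]
    rw [Matrix.add_mulVec, dotProduct_add, h1] at h2
    linarith
  have hSABA : ∀ j : Fin d₂, ξ₀ ⬝ᵥ ((A * (J (Pi.single j 1)) * A) *ᵥ ξ₀) = 0 := by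
    intro j
    have hmat : A * (J (Pi.single j 1)) * A = (-(2 * (nm⁻¹ * μ₀ j))) • A + J (Pi.single j 1) := by
      calc A * (J (Pi.single j 1)) * A
          = (A * (J (Pi.single j 1)) + (J (Pi.single j 1)) * A) * A
            - (J (Pi.single j 1)) * (A * A) := by noncomm_ring
        _ = ((-(2 * (nm⁻¹ * μ₀ j))) • (1 : Matrix (Fin d₁) (Fin d₁) ℝ)) * A
            - (J (Pi.single j 1)) * (-1) := by rw [hABBA j, hA2]
        _ = (-(2 * (nm⁻¹ * μ₀ j))) • A + J (Pi.single j 1) := by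
            rw [Matrix.smul_mul, one_mul, Matrix.mul_neg, mul_one, sub_neg_eq_add]
    rw [hmat, Matrix.add_mulVec, dotProduct_add, Matrix.smul_mulVec, dotProduct_smul,
      skewDot hAskew, skewDot (hskew _)]
    simp
  have hd1 : ∀ j : Fin d₂, ξ₀ ⬝ᵥ ((J (Pi.single j 1)) *ᵥ ξ₀) = 0 :=
    fun j => skewDot (hskew _) ξ₀
  have hd2 : ∀ j : Fin d₂, (A *ᵥ ξ₀) ⬝ᵥ ((J (Pi.single j 1)) *ᵥ ξ₀)
      = (nm⁻¹ * μ₀ j) * (ξ₀ ⬝ᵥ ξ₀) := by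
    intro j
    rw [dotMM, hskew, Matrix.neg_mul, Matrix.neg_mulVec, dotProduct_neg, hSBA j, neg_neg]
  have hd3 : ∀ j : Fin d₂, ξ₀ ⬝ᵥ ((J (Pi.single j 1)) *ᵥ (A *ᵥ ξ₀))
      = -((nm⁻¹ * μ₀ j) * (ξ₀ ⬝ᵥ ξ₀)) := by
    intro j
    rw [Matrix.mulVec_mulVec, hSBA j]
  have hd4 : ∀ j : Fin d₂, (A *ᵥ ξ₀) ⬝ᵥ ((J (Pi.single j 1)) *ᵥ (A *ᵥ ξ₀)) = 0 := by
    intro j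
    rw [Matrix.mulVec_mulVec, dotMM]
    have htr : ((J (Pi.single j 1)) * A)ᵀ * A = A * (J (Pi.single j 1)) * A := by
      rw [Matrix.transpose_mul, hAskew, hskew, Matrix.neg_mul, Matrix.mul_neg, neg_neg,
        Matrix.mul_assoc]
    rw [htr, hSABA j]
  -- value of u-derivative
  have huval : ∀ (t : ℝ) (j : Fin d₂), V t ⬝ᵥ ((J (Pi.single j 1)) *ᵥ x t)
      = (nm⁻¹ * μ₀ j) * (ξ₀ ⬝ᵥ ξ₀) * nm⁻¹ * (1 - Real.cos ((nm/c)*t)) := by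
    intro t j
    rw [hVform t, hxform t, Matrix.mulVec_add, Matrix.mulVec_smul, Matrix.mulVec_smul]
    simp only [add_dotProduct, dotProduct_add, smul_dotProduct, dotProduct_smul, smul_eq_mul]
    rw [hd1 j, hd2 j, hd3 j, hd4 j]
    have hpy := Real.sin_sq_add_cos_sq ((nm/c)*t)
    linear_combination ((nm⁻¹ * μ₀ j) * (ξ₀ ⬝ᵥ ξ₀) * nm⁻¹) * hpy
  -- explicit formula for u
  have huform : ∀ (t : ℝ) (j : Fin d₂), u t j
      = (c * (nm⁻¹ * μ₀ j) / (2*nm)) * (t - (c/nm) * Real.sin ((nm/c)*t)) := by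
    have hder : ∀ (j : Fin d₂) (t : ℝ), HasDerivAt (fun s => u s j
        - (c * (nm⁻¹ * μ₀ j) / (2*nm)) * (s - (c/nm) * Real.sin ((nm/c)*s))) 0 t := by
      intro j t
      have hc1 : HasDerivAt (fun s : ℝ => (c * (nm⁻¹ * μ₀ j) / (2*nm))
          * (s - (c/nm) * Real.sin ((nm/c)*s)))
          ((c * (nm⁻¹ * μ₀ j) / (2*nm)) * (1 - (c/nm) * (Real.cos ((nm/c)*t) * (nm/c)))) t := by
        exact ((hasDerivAt_id t).sub ((hsind t).const_mul (c/nm))).const_mul _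
      have h := (hu'' t j).sub hc1
      refine HasDerivAt.congr_deriv h ?_
      rw [huval t j, ← hcsq]
      field_simp
      ring
    intro t j
    have h' : u t j - (c * (nm⁻¹ * μ₀ j) / (2*nm)) * (t - (c/nm) * Real.sin ((nm/c)*t))
        = u 0 j - (c * (nm⁻¹ * μ₀ j) / (2*nm)) * (0 - (c/nm) * Real.sin ((nm/c)*0)) :=
      constOf (hder j) t
    rw [hu0] at h'
    simp only [Pi.zero_apply, mul_zero, Real.sin_zero, sub_self, sub_zero, zero_sub,
      neg_zero, mul_zero] at h'
    linarith [h']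
  -- final assembly
  have hθeq : ∀ t : ℝ, (nm/c)*t = 2*(t*nm/(2*c)) := by
    intro t
    field_simp
  have goal1 : ∀ t : ℝ, x t = (t * (Real.sin (t*nm/(2*c)) / (t*nm/(2*c)))) •
      (Real.cos (t*nm/(2*c)) • (c⁻¹ • ξ₀)
        + Real.sin (t*nm/(2*c)) • (A *ᵥ (c⁻¹ • ξ₀))) := by
    intro t
    rcases eq_or_ne t 0 with rfl | ht
    · rw [hx0, zero_mul, zero_smul]
    · rw [hxform t, hθeq t, Real.sin_two_mul, cosTwoMulSin, Matrix.mulVec_smul]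
      match_scalars
      · field_simp
      · field_simp
        ring
  have goal2 : ∀ t : ℝ, ξ t = Real.cos (t*nm/(2*c)) • (Real.cos (t*nm/(2*c)) • ξ₀
      + Real.sin (t*nm/(2*c)) • (A *ᵥ ξ₀)) := by
    intro t
    rw [hξform t, hVform t, hxform t, hθeq t, Real.sin_two_mul, Real.cos_two_mul, hJA]
    rw [Matrix.mulVec_add, Matrix.mulVec_smul, Matrix.mulVec_smul, Matrix.smul_mulVec,
      Matrix.smul_mulVec, Matrix.mulVec_mulVec, hA2,
      show ((-1 : Matrix (Fin d₁) (Fin d₁) ℝ) *ᵥ ξ₀) = -ξ₀ by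
        rw [Matrix.neg_mulVec, Matrix.one_mulVec]]
    match_scalars
    · field_simp
      ring
    · field_simp
      ring
  have goal3 : ∀ t : ℝ, u t = (t ^ 2 / (4 * (t*nm/(2*c)))
      * (1 - Real.sin (t*nm/(2*c)) / (t*nm/(2*c)) * Real.cos (t*nm/(2*c)))) • μb := by
    intro t
    rcases eq_or_ne t 0 with rfl | ht
    · rw [hu0]
      norm_num
    · funext j
      rw [huform t j, hμbdef]
      rw [show ((t ^ 2 / (4 * (t*nm/(2*c))) * (1 - Real.sin (t*nm/(2*c)) / (t*nm/(2*c))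
          * Real.cos (t*nm/(2*c)))) • (nm⁻¹ • μ₀)) j
        = (t ^ 2 / (4 * (t*nm/(2*c))) * (1 - Real.sin (t*nm/(2*c)) / (t*nm/(2*c))
          * Real.cos (t*nm/(2*c)))) * (nm⁻¹ * μ₀ j) from by
          simp [mul_assoc]]
      rw [hθeq t, Real.sin_two_mul]
      field_simp
      ring
  intro t
  refine ⟨?_, ?_, ?_⟩
  · have h := goal1 t
    rw [hAdef, hμbdef] at h
    exact h
  · have h := goal2 t
    rw [hAdef, hμbdef] at h
    exact h
  · have h := goal3 t
    rw [hμbdef] at h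
    exact h
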